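/- For n > 4, there are exactly 4n modular consecutive Latin squares of order n. -/
import Mathlib


/-- An `n × n` Latin square with entries in `{1, …, n}`. -/
def latin (n : ℕ) (M : Fin n → Fin n → ℕ) : Prop :=
  (∀ i j, M i j ∈ Finset.Icc 1 n) ∧
  (∀ i, Function.Injective fun j => M i j) ∧
  (∀ j, Function.Injective fun i => M i j)

/-- Two cells are orthogonally adjacent. -/
def orthAdj (n : ℕ) (p q : Fin n × Fin n) : Prop :=
  (p.1 = q.1 ∧ (p.2.val + 1 = q.2.val ∨ q.2.val + 1 = p.2.val)) ∨
  (p.2 = q.2 ∧ (p.1.val + 1 = q.1.val ∨ q.1.val + 1 = p.1.val))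

/-- Two cells are a king's move apart (orthogonally or diagonally adjacent). -/
def kingAdj (n : ℕ) (p q : Fin n × Fin n) : Prop :=
  p ≠ q ∧ ((p.1.val : ℤ) - q.1.val).natAbs ≤ 1 ∧ ((p.2.val : ℤ) - q.2.val).natAbs ≤ 1

/-- Two cells are a knight's move apart. -/
def knightAdj (n : ℕ) (p q : Fin n × Fin n) : Prop :=
  (((p.1.val : ℤ) - q.1.val).natAbs = 1 ∧ ((p.2.val : ℤ) - q.2.val).natAbs = 2) ∨
  (((p.1.val : ℤ) - q.1.val).natAbs = 2 ∧ ((p.2.val : ℤ) - q.2.val).natAbs = 1)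

/-- Two cells are a bishop's move apart: on a common diagonal, at nonzero distance. -/
def bishopMove (n : ℕ) (p q : Fin n × Fin n) : Prop :=
  ((p.1.val : ℤ) - q.1.val).natAbs = ((p.2.val : ℤ) - q.2.val).natAbs ∧ p.1 ≠ q.1

/-- Two cells are orthogonally adjacent on the torus (wrapping around). -/
def torAdj (n : ℕ) (p q : Fin n × Fin n) : Prop :=
  p ≠ q ∧
    ((p.1 = q.1 ∧ ((p.2.val + 1) % n = q.2.val ∨ (q.2.val + 1) % n = p.2.val)) ∨
     (p.2 = q.2 ∧ ((p.1.val + 1) % n = q.1.val ∨ (q.1.val + 1) % n = p.1.val)))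

/-- Two values differ by exactly 1. -/
def diffOne (a b : ℕ) : Prop := ((a : ℤ) - (b : ℤ)).natAbs = 1

namespace Stmt12
variable {n : ℕ}

def rep (n : ℕ) (x : ZMod n) : ℕ := if x = 0 then n else x.val

lemma cast_rep (hn : 4 < n) (x : ZMod n) : ((rep n x : ℕ) : ZMod n) = x := by
  haveI : NeZero n := ⟨by omega⟩
  unfold rep; split
  · simp [*]
  · exact ZMod.natCast_zmod_val x

lemma rep_mem (hn : 4 < n) (x : ZMod n) : rep n x ∈ Finset.Icc 1 n := by
  haveI : NeZero n := ⟨by omega⟩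
  unfold rep; split
  · simp; omega
  · rename_i h
    have h1 : x.val < n := ZMod.val_lt x
    have h2 : x.val ≠ 0 := by
      intro h0; exact h (by rwa [← ZMod.val_eq_zero])
    simp [Finset.mem_Icc]; omega

lemma rep_cast_of_mem (hn : 4 < n) {a : ℕ} (ha : a ∈ Finset.Icc 1 n) :
    rep n ((a : ℕ) : ZMod n) = a := by
  haveI : NeZero n := ⟨by omega⟩
  simp only [Finset.mem_Icc] at ha
  rcases eq_or_lt_of_le ha.2 with h | h
  · subst h; simp [rep]
  · have hne : ((a : ℕ) : ZMod n) ≠ 0 := by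
      rw [Ne, ZMod.natCast_eq_zero_iff]
      intro hd
      have := Nat.le_of_dvd (by omega) hd
      omega
    rw [rep, if_neg hne, ZMod.val_natCast_of_lt h]

lemma cast_injOn (hn : 4 < n) {a b : ℕ} (ha : a ∈ Finset.Icc 1 n)
    (hb : b ∈ Finset.Icc 1 n) (h : (a : ZMod n) = (b : ZMod n)) : a = b := by
  rw [← rep_cast_of_mem hn ha, ← rep_cast_of_mem hn hb, h]

lemma nz2 (hn : 4 < n) : (2 : ZMod n) ≠ 0 := by
  haveI : NeZero n := ⟨by omega⟩
  intro h
  have h2 : ((2 : ℕ) : ZMod n) = 0 := by push_cast; exact h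
  rw [ZMod.natCast_eq_zero_iff] at h2
  have := Nat.le_of_dvd (by omega) h2
  omega

lemma nz4 (hn : 4 < n) : (4 : ZMod n) ≠ 0 := by
  haveI : NeZero n := ⟨by omega⟩
  intro h
  have h2 : ((4 : ℕ) : ZMod n) = 0 := by push_cast; exact h
  rw [ZMod.natCast_eq_zero_iff] at h2
  have := Nat.le_of_dvd (by omega) h2
  omega

lemma one_ne_neg_one (hn : 4 < n) : (1 : ZMod n) ≠ -1 := by
  intro h
  exact nz2 hn (by linear_combination h)

lemma one_nz (hn : 4 < n) : (1 : ZMod n) ≠ 0 := by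
  intro h
  exact nz2 hn (by linear_combination 2 * h)

def sgn (n : ℕ) (b : Bool) : ZMod n := if b then 1 else -1

lemma sgn_pm (b : Bool) : sgn n b = 1 ∨ sgn n b = -1 := by
  cases b <;> simp [sgn]

lemma sgn_nz (hn : 4 < n) (b : Bool) : sgn n b ≠ 0 := by
  rcases sgn_pm (n := n) b with h | h <;> rw [h]
  · exact one_nz hn
  · intro h2
    exact one_nz hn (by linear_combination -h2)

lemma sgn_inj (hn : 4 < n) : Function.Injective (sgn n) := by
  intro a b h
  cases a <;> cases b <;> simp [sgn] at h ⊢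
  · exact one_ne_neg_one hn h.symm
  · exact one_ne_neg_one hn h

def E (n : ℕ) (c : ZMod n) (s t : Bool) : Fin n → Fin n → ℕ :=
  fun i j => rep n (c + sgn n s * (i.val : ZMod n) + sgn n t * (j.val : ZMod n))

lemma cast_E (hn : 4 < n) (c : ZMod n) (s t : Bool) (i j : Fin n) :
    ((E n c s t i j : ℕ) : ZMod n)
      = c + sgn n s * (i.val : ZMod n) + sgn n t * (j.val : ZMod n) :=
  cast_rep hn _

lemma line (hn : 4 < n) (f : Fin n → ZMod n) (hinj : Function.Injective f)
    (hadj : ∀ (j : ℕ) (h : j + 1 < n),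
      f ⟨j + 1, h⟩ - f ⟨j, by omega⟩ = 1 ∨ f ⟨j + 1, h⟩ - f ⟨j, by omega⟩ = -1) :
    ∃ ε : ZMod n, (ε = 1 ∨ ε = -1) ∧
      ∀ j : Fin n, f j = f ⟨0, by omega⟩ + ε * (j.val : ZMod n) := by
  refine ⟨f ⟨1, by omega⟩ - f ⟨0, by omega⟩, hadj 0 (by omega), ?_⟩
  have main : ∀ (j : ℕ) (hj : j < n),
      f ⟨j, hj⟩ = f ⟨0, by omega⟩
        + (f ⟨1, by omega⟩ - f ⟨0, by omega⟩) * ((j : ℕ) : ZMod n) := by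
    intro j
    induction j using Nat.strong_induction_on with
    | _ j ih =>
      intro hj
      match j, hj with
      | 0, _ => simp
      | 1, h => push_cast; ring
      | (k+2), h =>
        have e2 := ih (k + 1) (by omega) (by omega)
        have e1 := ih k (by omega) (by omega)
        have hd := hadj (k + 1) h
        have he := hadj 0 (by omega)
        simp only [Nat.zero_add] at he
        simp only [show k + 1 + 1 = k + 2 from rfl] at hd
        push_cast at e1 e2 ⊢
        rcases hd with hd | hd <;> rcases he with he | he
        · linear_combination hd + e2 - he
        · exfalso
          have hc : f ⟨k + 2, h⟩ = f ⟨k, by omega⟩ := by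
            linear_combination hd + e2 - e1 + he
          have := hinj hc
          simp [Fin.ext_iff] at this
        · exfalso
          have hc : f ⟨k + 2, h⟩ = f ⟨k, by omega⟩ := by
            linear_combination hd + e2 - e1 + he
          have := hinj hc
          simp [Fin.ext_iff] at this
        · linear_combination hd + e2 - he
  intro j
  have := main j.1 j.2
  simpa using this

lemma exists_form (hn : 4 < n) (M : Fin n → Fin n → ℕ) (hl : latin n M)
    (hadj : ∀ p q : Fin n × Fin n, orthAdj n p q →
        ((M p.1 p.2 : ZMod n) - (M q.1 q.2 : ZMod n) = 1 ∨
         (M p.1 p.2 : ZMod n) - (M q.1 q.2 : ZMod n) = -1)) :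
    ∃ c s t, M = E n c s t := by
  obtain ⟨hmem, hrowinj, hcolinj⟩ := hl
  set m : Fin n → Fin n → ZMod n := fun i j => ((M i j : ℕ) : ZMod n) with hm
  have hrow : ∀ i : Fin n, ∃ ε : ZMod n, (ε = 1 ∨ ε = -1) ∧
      ∀ j : Fin n, m i j = m i ⟨0, by omega⟩ + ε * (j.val : ZMod n) := by
    intro i
    apply line hn (fun j => m i j)
    · intro a b hab
      exact hrowinj i (cast_injOn hn (hmem i a) (hmem i b) hab)
    · intro j h
      exact hadj (i, ⟨j + 1, h⟩) (i, ⟨j, by omega⟩) (Or.inl ⟨rfl, Or.inr rfl⟩)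
  have hcol : ∀ j : Fin n, ∃ δ : ZMod n, (δ = 1 ∨ δ = -1) ∧
      ∀ i : Fin n, m i j = m ⟨0, by omega⟩ j + δ * (i.val : ZMod n) := by
    intro j
    apply line hn (fun i => m i j)
    · intro a b hab
      exact hcolinj j (cast_injOn hn (hmem a j) (hmem b j) hab)
    · intro i h
      exact hadj (⟨i + 1, h⟩, j) (⟨i, by omega⟩, j) (Or.inr ⟨rfl, Or.inr rfl⟩)
  choose ε hε hrowf using hrow
  choose δ hδ hcolf using hcol
  have h0n : 0 < n := by omega
  have h1n : 1 < n := by omega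
  have h2n : 2 < n := by omega
  set z : Fin n := ⟨0, h0n⟩ with hz
  set i1 : Fin n := ⟨1, h1n⟩ with hi1
  set i2 : Fin n := ⟨2, h2n⟩ with hi2
  have hc1 : ((i1.val : ℕ) : ZMod n) = 1 := by simp [hi1]
  have hc2 : ((i2.val : ℕ) : ZMod n) = 2 := by simp [hi2]
  have key : ∀ i j : Fin n,
      δ z * (i.val : ZMod n) + ε i * (j.val : ZMod n)
        = ε z * (j.val : ZMod n) + δ j * (i.val : ZMod n) := by
    intro i j
    have A := hrowf i j
    have B := hcolf j i
    have C := hcolf z i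
    have D := hrowf z j
    first
    | linear_combination A - B + C - D
    | linear_combination -A + B - C + D
  have hεz1 : ε i1 = ε z := by
    by_contra hne
    have hs : ε i1 - ε z = 2 ∨ ε i1 - ε z = -2 := by
      rcases hε i1 with h1 | h1 <;> rcases hε z with h2 | h2
      · exact absurd (h1.trans h2.symm) hne
      · left; rw [h1, h2]; ring
      · right; rw [h1, h2]; ring
      · exact absurd (h1.trans h2.symm) hne
    have e1 : δ i1 - δ z = ε i1 - ε z := by
      have k := key i1 i1
      rw [hc1] at k
      linear_combination -k
    have e2 : δ i2 - δ z = (ε i1 - ε z) * 2 := by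
      have k := key i1 i2
      rw [hc1, hc2] at k
      linear_combination -k
    rcases hs with hs | hs <;> rw [hs] at e1 e2 <;>
      rcases hδ z with h0 | h0 <;> rcases hδ i1 with h1 | h1 <;>
      rcases hδ i2 with h2 | h2 <;> rw [h0, h1] at e1 <;> rw [h0, h2] at e2 <;>
      first
      | exact nz2 hn (by linear_combination e1)
      | exact nz2 hn (by linear_combination -e1)
      | exact nz4 hn (by linear_combination e1)
      | exact nz4 hn (by linear_combination -e1)
      | exact nz2 hn (by linear_combination e2)
      | exact nz2 hn (by linear_combination -e2)
      | exact nz4 hn (by linear_combination e2)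
      | exact nz4 hn (by linear_combination -e2)
  have hδall : ∀ j : Fin n, δ j = δ z := by
    intro j
    have k := key i1 j
    rw [hc1] at k
    first
    | linear_combination k + ((j.val : ℕ) : ZMod n) * hεz1
    | linear_combination -k - ((j.val : ℕ) : ZMod n) * hεz1
    | linear_combination k - ((j.val : ℕ) : ZMod n) * hεz1
    | linear_combination -k + ((j.val : ℕ) : ZMod n) * hεz1
  have hεall : ∀ i : Fin n, ε i = ε z := by
    intro i
    have k := key i i1
    rw [hc1] at k
    have hd := hδall i1
    first
    | linear_combination k + ((i.val : ℕ) : ZMod n) * hd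
    | linear_combination -k - ((i.val : ℕ) : ZMod n) * hd
    | linear_combination k - ((i.val : ℕ) : ZMod n) * hd
    | linear_combination -k + ((i.val : ℕ) : ZMod n) * hd
  have formula : ∀ i j : Fin n,
      m i j = m z z + δ z * (i.val : ZMod n) + ε z * (j.val : ZMod n) := by
    intro i j
    have A := hrowf i j
    have C := hcolf z i
    have he := hεall i
    linear_combination A + C + ((j.val : ℕ) : ZMod n) * he
  obtain ⟨s, hs⟩ : ∃ s : Bool, sgn n s = δ z := by
    rcases hδ z with h | h
    · exact ⟨true, by simp [sgn, h]⟩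
    · exact ⟨false, by simp [sgn, h]⟩
  obtain ⟨t, ht⟩ : ∃ t : Bool, sgn n t = ε z := by
    rcases hε z with h | h
    · exact ⟨true, by simp [sgn, h]⟩
    · exact ⟨false, by simp [sgn, h]⟩
  refine ⟨m z z, s, t, ?_⟩
  funext i j
  calc M i j = rep n ((M i j : ℕ) : ZMod n) := (rep_cast_of_mem hn (hmem i j)).symm
    _ = rep n (m z z + sgn n s * (i.val : ZMod n) + sgn n t * (j.val : ZMod n)) := by
        rw [hs, ht]; exact congrArg _ (formula i j)
    _ = E n (m z z) s t i j := rfl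

lemma fin_cast_inj (hn : 4 < n) {a b : Fin n}
    (h : ((a.val : ℕ) : ZMod n) = ((b.val : ℕ) : ZMod n)) : a = b := by
  haveI : NeZero n := ⟨by omega⟩
  have := congrArg ZMod.val h
  rw [ZMod.val_natCast_of_lt a.isLt, ZMod.val_natCast_of_lt b.isLt] at this
  exact Fin.ext this

lemma E_mem (hn : 4 < n) (c : ZMod n) (s t : Bool) :
    latin n (E n c s t) ∧ ∀ p q : Fin n × Fin n, orthAdj n p q →
        ((E n c s t p.1 p.2 : ZMod n) - (E n c s t q.1 q.2 : ZMod n) = 1 ∨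
         (E n c s t p.1 p.2 : ZMod n) - (E n c s t q.1 q.2 : ZMod n) = -1) := by
  constructor
  · refine ⟨fun i j => rep_mem hn _, ?_, ?_⟩
    · intro i a b hab
      have h := congrArg (fun x : ℕ => (x : ZMod n)) hab
      simp only [cast_E hn] at h
      apply fin_cast_inj hn
      have hsq : sgn n t * sgn n t = 1 := by
        rcases sgn_pm (n := n) t with ht | ht <;> rw [ht] <;> ring
      linear_combination sgn n t * h
        - (((a.val : ℕ) : ZMod n) - ((b.val : ℕ) : ZMod n)) * hsq
    · intro j a b hab
      have h := congrArg (fun x : ℕ => (x : ZMod n)) hab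
      simp only [cast_E hn] at h
      apply fin_cast_inj hn
      have hsq : sgn n s * sgn n s = 1 := by
        rcases sgn_pm (n := n) s with hs | hs <;> rw [hs] <;> ring
      linear_combination sgn n s * h
        - (((a.val : ℕ) : ZMod n) - ((b.val : ℕ) : ZMod n)) * hsq
  · rintro ⟨p1, p2⟩ ⟨q1, q2⟩ hpq
    simp only [orthAdj] at hpq
    rcases hpq with ⟨h1, h2 | h2⟩ | ⟨h1, h2 | h2⟩ <;>
      subst h1 <;>
      simp only [cast_E hn]
    · have hc : ((q2.val : ℕ) : ZMod n) = ((p2.val : ℕ) : ZMod n) + 1 := by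
        rw [← h2]; push_cast; ring
      rcases sgn_pm (n := n) t with h | h
      · right; rw [h, hc]; ring
      · left; rw [h, hc]; ring
    · have hc : ((p2.val : ℕ) : ZMod n) = ((q2.val : ℕ) : ZMod n) + 1 := by
        rw [← h2]; push_cast; ring
      rcases sgn_pm (n := n) t with h | h
      · left; rw [h, hc]; ring
      · right; rw [h, hc]; ring
    · have hc : ((q1.val : ℕ) : ZMod n) = ((p1.val : ℕ) : ZMod n) + 1 := by
        rw [← h2]; push_cast; ring
      rcases sgn_pm (n := n) s with h | h
      · right; rw [h, hc]; ring
      · left; rw [h, hc]; ring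
    · have hc : ((p1.val : ℕ) : ZMod n) = ((q1.val : ℕ) : ZMod n) + 1 := by
        rw [← h2]; push_cast; ring
      rcases sgn_pm (n := n) s with h | h
      · left; rw [h, hc]; ring
      · right; rw [h, hc]; ring

end Stmt12

/-- For `n > 4` there are exactly `4n` modular consecutive Latin squares of order `n`. -/
theorem stmt12 (n : ℕ) (hn : 4 < n) :
    Nat.card {M : Fin n → Fin n → ℕ // latin n M ∧
      ∀ p q : Fin n × Fin n, orthAdj n p q →
        ((M p.1 p.2 : ZMod n) - (M q.1 q.2 : ZMod n) = 1 ∨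
         (M p.1 p.2 : ZMod n) - (M q.1 q.2 : ZMod n) = -1)} = 4 * n := by
  haveI : NeZero n := ⟨by omega⟩
  let F : ZMod n × Bool × Bool → {M : Fin n → Fin n → ℕ // latin n M ∧
      ∀ p q : Fin n × Fin n, orthAdj n p q →
        ((M p.1 p.2 : ZMod n) - (M q.1 q.2 : ZMod n) = 1 ∨
         (M p.1 p.2 : ZMod n) - (M q.1 q.2 : ZMod n) = -1)} :=
    fun x => ⟨Stmt12.E n x.1 x.2.1 x.2.2, Stmt12.E_mem hn x.1 x.2.1 x.2.2⟩
  have hbij : Function.Bijective F := by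
    constructor
    · rintro ⟨c, s, t⟩ ⟨c', s', t'⟩ h
      have h' : Stmt12.E n c s t = Stmt12.E n c' s' t' := congrArg Subtype.val h
      have hrep : ∀ x y : ZMod n, Stmt12.rep n x = Stmt12.rep n y → x = y := fun x y hxy => by
        rw [← Stmt12.cast_rep hn x, ← Stmt12.cast_rep hn y, hxy]
      have e00 := hrep _ _ (congrFun (congrFun h' ⟨0, by omega⟩) ⟨0, by omega⟩)
      have e10 := hrep _ _ (congrFun (congrFun h' ⟨1, by omega⟩) ⟨0, by omega⟩)
      have e01 := hrep _ _ (congrFun (congrFun h' ⟨0, by omega⟩) ⟨1, by omega⟩)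
      norm_num at e00 e10 e01
      subst e00
      have hs : s = s' := Stmt12.sgn_inj hn (by linear_combination e10)
      have ht : t = t' := Stmt12.sgn_inj hn (by linear_combination e01)
      rw [hs, ht]
    · rintro ⟨M, hM⟩
      obtain ⟨c, s, t, rfl⟩ := Stmt12.exists_form hn M hM.1 hM.2
      exact ⟨(c, s, t), rfl⟩
  rw [← Nat.card_eq_of_bijective F hbij]
  rw [Nat.card_prod, Nat.card_prod, Nat.card_zmod]
  simp [Nat.card_eq_fintype_card]
  ring
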